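/- arXiv:1310.2407 — 2 statements merged into one kernel-verified Lean document; each statement's English description precedes it below -/
import Mathlib

section
/- Under the same hypotheses as in the convergence theorem for the auxiliary variables (namely: M ≥ 1, m ≥ 2, nonzero complex numbers r_1, …, r_m with |r_1| > … > |r_m|; for every k ≥ 0, a_k^{(n)} = Σ_{ℓ=1}^{m} c_{ℓ,k} r_ℓ^{n+k+1} + b_k^{(n)} with nonzero c_{ℓ,k}, |b_k^{(n)}| ≤ μ_k ρ_k^n, 0 < ρ_k < |r_m|, μ_k > 0; and all leading constants c_{k,j} for 0 ≤ k ≤ M, 0 ≤ j ≤ m are nonzero), for every i = 0, 1, …, M−1 and j = 1, 2, …, m−1 there exist a constant K > 0 and an integer N such that for all n ≥ N the denominators C_{i,j}^{(n)} and C_{i+1,j}^{(n)} are nonzero and |C_{i,j+1}^{(n)} C_{i+1,j−1}^{(n)} / (C_{i,j}^{(n)} C_{i+1,j}^{(n)})| ≤ K (|r_{j+1}|/|r_j|)^n. -/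
/-- The Casorati determinant: `C_{k,0}^{(n)} = 1` and for `j ≥ 1`,
`C_{k,j}^{(n)} = det (a_{k+ℓ}^{(n+s)})_{s,ℓ = 0,…,j-1}`. -/
noncomputable def casorati (a : ℕ → ℕ → ℂ) (k j n : ℕ) : ℂ :=
  Matrix.det (Matrix.of fun s ℓ : Fin j => a (k + (ℓ : ℕ)) (n + (s : ℕ)))

/-- The leading constant `c_{k,j} = Σ_{κ ∈ {1,…,j}^j} det M_κ`, where the `(s,ℓ)`
entry of `M_κ` is `c_{κ_ℓ, k+ℓ-1} r_{κ_ℓ}^{k+ℓ+s}` (here 0-based in `ℓ`, `s`);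
`c_{k,0} = 1`. -/
noncomputable def leadConst (m : ℕ) (r : Fin m → ℂ) (c : ℕ → Fin m → ℂ)
    (k j : ℕ) (h : j ≤ m) : ℂ :=
  ∑ κ : Fin j → Fin j,
    Matrix.det (Matrix.of fun s ℓ : Fin j =>
      c (k + (ℓ : ℕ)) (Fin.castLE h (κ ℓ)) *
        r (Fin.castLE h (κ ℓ)) ^ (k + (ℓ : ℕ) + 1 + (s : ℕ)))

/-- det vanishes if two columns are proportional to a common vector. -/
lemma det_zero_of_prop_columns {j : ℕ} (A : Matrix (Fin j) (Fin j) ℂ)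
    (ℓ ℓ' : Fin j) (hne : ℓ ≠ ℓ') (v : Fin j → ℂ) (α β : ℂ)
    (h1 : ∀ s, A s ℓ = α * v s) (h2 : ∀ s, A s ℓ' = β * v s) :
    A.det = 0 := by
  have hA : A = ((A.updateCol ℓ (α • v)).updateCol ℓ' (β • v)) := by
    ext s t
    simp only [Matrix.updateCol_apply]
    by_cases ht : t = ℓ <;> by_cases ht' : t = ℓ' <;>
      first
      | exact (hne (ht.symm.trans ht')).elim
      | simp [ht, ht', h1 s, h2 s, hne, hne.symm]
  rw [hA, Matrix.det_updateCol_smul]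
  have h3 : ((A.updateCol ℓ (α • v)).updateCol ℓ' v)
      = ((A.updateCol ℓ' v).updateCol ℓ (α • v)) := by
    ext s t
    simp only [Matrix.updateCol_apply]
    by_cases ht : t = ℓ <;> by_cases ht' : t = ℓ' <;>
      first
      | exact (hne (ht.symm.trans ht')).elim
      | simp [ht, ht', hne, hne.symm]
  rw [h3, Matrix.det_updateCol_smul]
  have h4 : ((A.updateCol ℓ' v).updateCol ℓ v).det = 0 := by
    apply Matrix.det_zero_of_column_eq hne
    intro s
    simp [Matrix.updateCol_apply, hne, hne.symm]
  rw [h4, mul_zero, mul_zero]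

lemma prod_lt_of_escape {m j : ℕ} (hjm : j ≤ m) (g : Fin (m+1) → ℝ)
    (hanti : StrictAnti g) (hpos : ∀ t, 0 < g t)
    (κ : Fin j → Fin (m+1))
    (hdup : ∀ ℓ ℓ', ℓ ≠ ℓ' → κ ℓ = κ ℓ' → (κ ℓ : ℕ) = m)
    (hesc : ∃ ℓ, j ≤ (κ ℓ : ℕ)) :
    ∏ ℓ, g (κ ℓ) < ∏ ℓ : Fin j, g ⟨(ℓ : ℕ), by omega⟩ := by
  classical
  set τ := Tuple.sort κ with hτ
  have hmono : Monotone (κ ∘ τ) := Tuple.monotone_sort κ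
  -- pointwise: i ≤ κ (τ i)
  have hge : ∀ n (h : n < j), n ≤ ((κ (τ ⟨n, h⟩)) : ℕ) := by
    intro n
    induction n with
    | zero => intro h; exact Nat.zero_le _
    | succ n ih =>
      intro h
      have hn : n < j := by omega
      have h1 : n ≤ ((κ (τ ⟨n, hn⟩)) : ℕ) := ih hn
      have h2 : κ (τ ⟨n, hn⟩) ≤ κ (τ ⟨n+1, h⟩) := by
        apply hmono
        exact Fin.mk_le_mk.mpr (by omega)
      rcases lt_or_eq_of_le h2 with hlt | heq
      · have : ((κ (τ ⟨n, hn⟩)) : ℕ) < ((κ (τ ⟨n+1, h⟩)) : ℕ) := hlt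
        omega
      · have hne : τ ⟨n, hn⟩ ≠ τ ⟨n+1, h⟩ := by
          intro hcon
          have h5 : (⟨n, hn⟩ : Fin j) = ⟨n+1, h⟩ := τ.injective hcon
          simp [Fin.mk.injEq] at h5
        have hm : ((κ (τ ⟨n, hn⟩)) : ℕ) = m := hdup _ _ hne heq
        omega
  -- product over sorted order
  have hprod : ∏ ℓ, g (κ ℓ) = ∏ i, g (κ (τ i)) := (Equiv.prod_comp τ (fun ℓ => g (κ ℓ))).symm
  rw [hprod]
  apply Finset.prod_lt_prod (f := fun i : Fin j => g (κ (τ i)))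
    (g := fun i : Fin j => g ⟨(i : ℕ), by omega⟩)
  · intro i _; exact hpos _
  · intro i _
    apply hanti.antitone
    exact Fin.mk_le_mk.mpr (hge i i.isLt)
  · obtain ⟨ℓ, hℓ⟩ := hesc
    refine ⟨τ.symm ℓ, Finset.mem_univ _, ?_⟩
    apply hanti
    have : κ (τ (τ.symm ℓ)) = κ ℓ := by rw [Equiv.apply_symm_apply]
    rw [this]
    exact Fin.mk_lt_mk.mpr (by
      have := (τ.symm ℓ).isLt
      omega)

lemma sum_geom_bound {ι : Type*} (s : Finset ι) (T : ι → ℕ → ℂ) (Q : ℝ)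
    (hQ : 0 ≤ Q)
    (h : ∀ i ∈ s, ∃ C, 0 < C ∧ ∃ θ, 0 ≤ θ ∧ θ < 1 ∧
      ∀ n, ‖T i n‖ ≤ C * θ ^ n * Q ^ n) :
    ∃ C, 0 < C ∧ ∃ θ, 0 ≤ θ ∧ θ < 1 ∧
      ∀ n, ‖∑ i ∈ s, T i n‖ ≤ C * θ ^ n * Q ^ n := by
  classical
  induction s using Finset.cons_induction with
  | empty =>
    refine ⟨1, one_pos, 1/2, by norm_num, by norm_num, fun n => ?_⟩
    simp only [Finset.sum_empty, norm_zero]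
    positivity
  | cons a s ha ih =>
    obtain ⟨C₁, hC₁, θ₁, hθ₁0, hθ₁1, hb₁⟩ := h a (Finset.mem_cons_self a s)
    obtain ⟨C₂, hC₂, θ₂, hθ₂0, hθ₂1, hb₂⟩ := ih (fun i hi => h i (Finset.mem_cons_of_mem hi))
    refine ⟨C₁ + C₂, by positivity, max θ₁ θ₂, le_max_of_le_left hθ₁0,
      max_lt hθ₁1 hθ₂1, fun n => ?_⟩
    rw [Finset.sum_cons]
    calc ‖T a n + ∑ i ∈ s, T i n‖ ≤ ‖T a n‖ + ‖∑ i ∈ s, T i n‖ := norm_add_le _ _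
    _ ≤ C₁ * θ₁ ^ n * Q ^ n + C₂ * θ₂ ^ n * Q ^ n := add_le_add (hb₁ n) (hb₂ n)
    _ ≤ C₁ * (max θ₁ θ₂) ^ n * Q ^ n + C₂ * (max θ₁ θ₂) ^ n * Q ^ n := by
        gcongr
        · exact le_max_left _ _
        · exact le_max_right _ _
    _ = (C₁ + C₂) * (max θ₁ θ₂) ^ n * Q ^ n := by ring

lemma key (m : ℕ) (hm : 1 ≤ m)
    (a b : ℕ → ℕ → ℂ) (r : Fin m → ℂ) (c : ℕ → Fin m → ℂ) (ρ μ : ℕ → ℝ)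
    (hr0 : ∀ ℓ, r ℓ ≠ 0)
    (hrdec : ∀ ℓ₁ ℓ₂ : Fin m, ℓ₁ < ℓ₂ → ‖r ℓ₂‖ < ‖r ℓ₁‖)
    (hρpos : ∀ k, 0 < ρ k)
    (hρlt : ∀ k, ρ k < ‖r ⟨m - 1, by omega⟩‖)
    (hμ : ∀ k, 0 < μ k)
    (hb : ∀ k n : ℕ, ‖b k n‖ ≤ μ k * ρ k ^ n)
    (ha : ∀ k n : ℕ, a k n = (∑ ℓ, c k ℓ * r ℓ ^ (n + k + 1)) + b k n)
    (k j : ℕ) (hj : j ≤ m) :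
    ∃ C, 0 < C ∧ ∃ θ, 0 ≤ θ ∧ θ < 1 ∧ ∀ n,
      ‖casorati a k j n - (∏ ℓ : Fin j, r (Fin.castLE hj ℓ)) ^ n * leadConst m r c k j hj‖
        ≤ C * θ ^ n * ‖∏ ℓ : Fin j, r (Fin.castLE hj ℓ)‖ ^ n := by
  classical
  -- trivial case j = 0
  rcases Nat.eq_zero_or_pos j with rfl | hj0
  · refine ⟨1, one_pos, 1/2, by norm_num, by norm_num, fun n => ?_⟩
    have h1 : casorati a k 0 n = 1 := by simp [casorati, Matrix.det_fin_zero]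
    have h2 : leadConst m r c k 0 hj = 1 := by
      simp [leadConst, Matrix.det_fin_zero]
    rw [h1, h2]
    have h3 : (∏ ℓ : Fin 0, r (Fin.castLE hj ℓ)) = 1 := by simp
    rw [h3]
    simp
  set P : ℂ := ∏ ℓ : Fin j, r (Fin.castLE hj ℓ) with hP
  have hPne : P ≠ 0 := Finset.prod_ne_zero_iff.mpr (fun ℓ _ => hr0 _)
  have hPpos : 0 < ‖P‖ := norm_pos_iff.mpr hPne
  -- the error exponent base ρ̄
  set ρbar : ℝ := (Finset.range (j+1)).sup' ⟨0, by simp⟩ (fun ℓ => ρ (k+ℓ)) with hρbar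
  have hρbarpos : 0 < ρbar := by
    have := Finset.le_sup' (fun ℓ => ρ (k+ℓ)) (by simp : 0 ∈ Finset.range (j+1))
    calc (0:ℝ) < ρ (k+0) := hρpos _
    _ ≤ ρbar := this
  have hρbarlt : ρbar < ‖r ⟨m - 1, by omega⟩‖ := by
    exact (Finset.sup'_lt_iff _).mpr (fun ℓ _ => hρlt _)
  have hρbarle : ∀ ℓ : Fin j, ρ (k + (ℓ:ℕ)) ≤ ρbar := by
    intro ℓ
    exact Finset.le_sup' (fun ℓ => ρ (k+ℓ)) (by simp [Finset.mem_range] : (ℓ:ℕ) ∈ Finset.range (j+1))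
  -- the comparison function g
  set g : Fin (m+1) → ℝ := fun t => if h : (t:ℕ) < m then ‖r ⟨t, h⟩‖ else ρbar with hg
  have hgpos : ∀ t, 0 < g t := by
    intro t
    by_cases h : (t:ℕ) < m
    · simp only [hg, dif_pos h]
      exact norm_pos_iff.mpr (hr0 _)
    · simp only [hg, dif_neg h]
      exact hρbarpos
  have hganti : StrictAnti g := by
    intro t t' htt'
    have ht : (t:ℕ) < m := by
      have h1 : (t:ℕ) < (t':ℕ) := htt'
      have h2 : (t':ℕ) < m + 1 := t'.isLt
      omega
    by_cases h' : (t':ℕ) < m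
    · simp only [hg, dif_pos ht, dif_pos h']
      exact hrdec _ _ (by exact htt')
    · simp only [hg, dif_pos ht, dif_neg h']
      have h3 : (t':ℕ) = m := by have := t'.isLt; omega
      calc ρbar < ‖r ⟨m-1, by omega⟩‖ := hρbarlt
      _ ≤ ‖r ⟨t, ht⟩‖ := by
          rcases eq_or_lt_of_le (by omega : (t:ℕ) ≤ m - 1) with he | hl
          · exact le_of_eq (by
              have h4 : (⟨m-1, by omega⟩ : Fin m) = ⟨(t:ℕ), ht⟩ := by
                rw [Fin.mk_eq_mk]; omega
              rw [h4])
          · exact le_of_lt (hrdec _ _ (by exact (Fin.mk_lt_mk.mpr hl)))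
  -- decomposition of a into m+1 pieces
  set f : Fin (m+1) → ℕ → ℕ → ℂ :=
    fun t k' n => if h : (t:ℕ) < m then c k' ⟨t, h⟩ * r ⟨t, h⟩ ^ (n + k' + 1) else b k' n
    with hf
  have ha' : ∀ k' n, a k' n = ∑ t : Fin (m+1), f t k' n := by
    intro k' n
    rw [ha, Fin.sum_univ_castSucc]
    congr 1
    · apply Finset.sum_congr rfl
      intro t _
      have h1 : ((Fin.castSucc t : Fin (m+1)) : ℕ) < m := t.isLt
      simp only [hf, dif_pos h1]
      congr 1
    · simp only [hf]
      rw [dif_neg (by simp)]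
  -- the expansion terms
  set T : (Fin j → Fin (m+1)) → ℕ → ℂ :=
    fun κ n => Matrix.det (Matrix.of fun s ℓ : Fin j => f (κ ℓ) (k + (ℓ:ℕ)) (n + (s:ℕ)))
    with hT
  have expand : ∀ n, casorati a k j n = ∑ κ : Fin j → Fin (m+1), T κ n := by
    intro n
    have h1 : casorati a k j n
        = Matrix.detRowAlternating (Matrix.of fun ℓ s : Fin j => a (k + (ℓ:ℕ)) (n + (s:ℕ))) := by
      rw [casorati, ← Matrix.det_transpose]
      rfl
    rw [h1]
    have h2 : (Matrix.of fun ℓ s : Fin j => a (k + (ℓ:ℕ)) (n + (s:ℕ)))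
        = fun ℓ : Fin j => ∑ t : Fin (m+1), (fun s : Fin j => f t (k + (ℓ:ℕ)) (n + (s:ℕ))) := by
      funext ℓ s
      rw [Matrix.of_apply]
      rw [ha']
      rw [Finset.sum_apply]
    rw [h2]
    show Matrix.detRowAlternating.toMultilinearMap
      (fun ℓ : Fin j => ∑ t : Fin (m+1), (fun s : Fin j => f t (k + (ℓ:ℕ)) (n + (s:ℕ)))) = _
    rw [Matrix.detRowAlternating.toMultilinearMap.map_sum]
    apply Finset.sum_congr rfl
    intro κ _
    show Matrix.detRowAlternating _
      = (Matrix.of fun s ℓ : Fin j => f (κ ℓ) (k + (ℓ:ℕ)) (n + (s:ℕ))).det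
    rw [← Matrix.det_transpose]
    rfl
  -- the leading matrices
  set Mmat : (Fin j → Fin j) → Matrix (Fin j) (Fin j) ℂ := fun κ' =>
    Matrix.of fun s ℓ : Fin j =>
      c (k + (ℓ : ℕ)) (Fin.castLE hj (κ' ℓ)) *
        r (Fin.castLE hj (κ' ℓ)) ^ (k + (ℓ : ℕ) + 1 + (s : ℕ)) with hMmat
  have hLead : leadConst m r c k j hj = ∑ κ' : Fin j → Fin j, (Mmat κ').det := rfl
  have hjm1 : j ≤ m + 1 := by omega
  -- value of the terms with all indices < j
  have hTgood : ∀ (κ' : Fin j → Fin j) (n : ℕ),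
      T (fun ℓ => Fin.castLE hjm1 (κ' ℓ)) n = P ^ n * (Mmat κ').det := by
    intro κ' n
    have hmat : (Matrix.of fun s ℓ : Fin j => f (Fin.castLE hjm1 (κ' ℓ)) (k + (ℓ:ℕ)) (n + (s:ℕ)))
        = Mmat κ' * Matrix.diagonal (fun ℓ => r (Fin.castLE hj (κ' ℓ)) ^ n) := by
      ext s ℓ
      rw [Matrix.mul_diagonal]
      have hlt : ((Fin.castLE hjm1 (κ' ℓ) : Fin (m+1)) : ℕ) < m :=
        lt_of_lt_of_le (κ' ℓ).isLt hj
      show f (Fin.castLE hjm1 (κ' ℓ)) (k + (ℓ:ℕ)) (n + (s:ℕ)) = _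
      rw [hf]
      simp only [dif_pos hlt]
      have hfin : (⟨((Fin.castLE hjm1 (κ' ℓ) : Fin (m+1)) : ℕ), hlt⟩ : Fin m)
          = Fin.castLE hj (κ' ℓ) := rfl
      rw [hfin]
      have hexp : (n + (s:ℕ)) + (k + (ℓ:ℕ)) + 1 = (k + (ℓ:ℕ) + 1 + (s:ℕ)) + n := by omega
      rw [hexp, pow_add, ← mul_assoc]
      rfl
    show (Matrix.of fun s ℓ : Fin j =>
        f (Fin.castLE hjm1 (κ' ℓ)) (k + (ℓ:ℕ)) (n + (s:ℕ))).det = _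
    rw [hmat, Matrix.det_mul, Matrix.det_diagonal]
    have hpow : ∏ ℓ : Fin j, r (Fin.castLE hj (κ' ℓ)) ^ n
        = (∏ ℓ : Fin j, r (Fin.castLE hj (κ' ℓ))) ^ n := by
      rw [Finset.prod_pow]
    rw [hpow]
    by_cases hinj : Function.Injective κ'
    · have hbij : Function.Bijective κ' := Finite.injective_iff_bijective.mp hinj
      have hprod : ∏ ℓ : Fin j, r (Fin.castLE hj (κ' ℓ)) = P := by
        rw [hP]
        exact Equiv.prod_comp (Equiv.ofBijective κ' hbij) (fun ℓ => r (Fin.castLE hj ℓ))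
      rw [hprod]; ring
    · obtain ⟨ℓ₁, ℓ₂, hval, hne⟩ := Function.not_injective_iff.mp hinj
      have hdet : (Mmat κ').det = 0 := by
        apply det_zero_of_prop_columns (Mmat κ') ℓ₁ ℓ₂ hne
          (fun s => r (Fin.castLE hj (κ' ℓ₁)) ^ (s:ℕ))
          (c (k + (ℓ₁:ℕ)) (Fin.castLE hj (κ' ℓ₁)) * r (Fin.castLE hj (κ' ℓ₁)) ^ (k + (ℓ₁:ℕ) + 1))
          (c (k + (ℓ₂:ℕ)) (Fin.castLE hj (κ' ℓ₁)) * r (Fin.castLE hj (κ' ℓ₁)) ^ (k + (ℓ₂:ℕ) + 1))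
        · intro s
          show c (k + (ℓ₁:ℕ)) (Fin.castLE hj (κ' ℓ₁)) *
            r (Fin.castLE hj (κ' ℓ₁)) ^ (k + (ℓ₁:ℕ) + 1 + (s:ℕ)) = _
          rw [pow_add, ← mul_assoc]
        · intro s
          show c (k + (ℓ₂:ℕ)) (Fin.castLE hj (κ' ℓ₂)) *
            r (Fin.castLE hj (κ' ℓ₂)) ^ (k + (ℓ₂:ℕ) + 1 + (s:ℕ)) = _
          rw [hval, pow_add, ← mul_assoc]
      rw [hdet, mul_zero, zero_mul]
  -- sum over the "good" maps equals the main term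
  have hgood : ∀ n, (∑ κ ∈ Finset.univ.filter
        (fun κ : Fin j → Fin (m+1) => ∀ ℓ, ((κ ℓ):ℕ) < j), T κ n)
      = P ^ n * leadConst m r c k j hj := by
    intro n
    rw [hLead, Finset.mul_sum]
    apply Finset.sum_nbij'
      (i := fun κ (ℓ : Fin j) =>
        if h : ((κ ℓ):ℕ) < j then (⟨((κ ℓ):ℕ), h⟩ : Fin j) else ⟨0, hj0⟩)
      (j := fun (κ' : Fin j → Fin j) ℓ => Fin.castLE hjm1 (κ' ℓ))
    · intro κ hκ
      exact Finset.mem_univ _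
    · intro κ' _
      rw [Finset.mem_filter]
      exact ⟨Finset.mem_univ _, fun ℓ => (κ' ℓ).isLt⟩
    · intro κ hκ
      rw [Finset.mem_filter] at hκ
      funext ℓ
      simp only [dif_pos (hκ.2 ℓ)]
      exact Fin.ext rfl
    · intro κ' _
      funext ℓ
      simp only [dif_pos (show ((Fin.castLE hjm1 (κ' ℓ) : Fin (m+1)):ℕ) < j from (κ' ℓ).isLt)]
      exact Fin.ext rfl
    · intro κ hκ
      rw [Finset.mem_filter] at hκ
      have hκeq : κ = fun ℓ => Fin.castLE hjm1
          ((fun ℓ => if h : ((κ ℓ):ℕ) < j then (⟨((κ ℓ):ℕ), h⟩ : Fin j) else ⟨0, hj0⟩) ℓ) := by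
        funext ℓ
        simp only [dif_pos (hκ.2 ℓ)]
        exact Fin.ext rfl
      conv_lhs => rw [hκeq]
      exact hTgood _ n
  -- bound the bad terms
  have hbad : ∃ C, 0 < C ∧ ∃ θ, 0 ≤ θ ∧ θ < 1 ∧ ∀ n,
      ‖∑ κ ∈ Finset.univ.filter
        (fun κ : Fin j → Fin (m+1) => ¬ ∀ ℓ, ((κ ℓ):ℕ) < j), T κ n‖
      ≤ C * θ ^ n * ‖P‖ ^ n := by
    apply sum_geom_bound _ _ _ (le_of_lt hPpos)
    intro κ hκ
    rw [Finset.mem_filter] at hκ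
    have hesc : ∃ ℓ, j ≤ ((κ ℓ):ℕ) := by
      obtain ⟨ℓ, hℓ⟩ := not_forall.mp hκ.2
      exact ⟨ℓ, by omega⟩
    by_cases hdup : ∃ ℓ₁ ℓ₂ : Fin j, ℓ₁ ≠ ℓ₂ ∧ κ ℓ₁ = κ ℓ₂ ∧ ((κ ℓ₁):ℕ) < m
    · -- two proportional columns: the term vanishes
      obtain ⟨ℓ₁, ℓ₂, hne, hval, hlt⟩ := hdup
      refine ⟨1, one_pos, 1/2, by norm_num, by norm_num, fun n => ?_⟩
      have hT0 : T κ n = 0 := by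
        apply det_zero_of_prop_columns _ ℓ₁ ℓ₂ hne
          (fun s : Fin j => r ⟨((κ ℓ₁):ℕ), hlt⟩ ^ (n + (s:ℕ)))
          (c (k + (ℓ₁:ℕ)) ⟨((κ ℓ₁):ℕ), hlt⟩ * r ⟨((κ ℓ₁):ℕ), hlt⟩ ^ ((k + (ℓ₁:ℕ)) + 1))
          (c (k + (ℓ₂:ℕ)) ⟨((κ ℓ₁):ℕ), hlt⟩ * r ⟨((κ ℓ₁):ℕ), hlt⟩ ^ ((k + (ℓ₂:ℕ)) + 1))
        · intro s
          show f (κ ℓ₁) (k + (ℓ₁:ℕ)) (n + (s:ℕ)) = _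
          rw [hf]
          simp only [dif_pos hlt]
          rw [show (n + (s:ℕ)) + (k + (ℓ₁:ℕ)) + 1 = ((k + (ℓ₁:ℕ)) + 1) + (n + (s:ℕ)) by omega,
            pow_add, ← mul_assoc]
        · intro s
          show f (κ ℓ₂) (k + (ℓ₂:ℕ)) (n + (s:ℕ)) = _
          rw [← hval, hf]
          simp only [dif_pos hlt]
          rw [show (n + (s:ℕ)) + (k + (ℓ₂:ℕ)) + 1 = ((k + (ℓ₂:ℕ)) + 1) + (n + (s:ℕ)) by omega,
            pow_add, ← mul_assoc]
      rw [hT0, norm_zero]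
      positivity
    · -- repeated values only at index m; geometric bound
      push_neg at hdup
      have hdup' : ∀ ℓ₁ ℓ₂ : Fin j, ℓ₁ ≠ ℓ₂ → κ ℓ₁ = κ ℓ₂ → ((κ ℓ₁):ℕ) = m := by
        intro ℓ₁ ℓ₂ h1 h2
        have := hdup ℓ₁ ℓ₂ h1 h2
        have := (κ ℓ₁).isLt
        omega
      -- column-wise bounds
      have hcol : ∀ ℓ : Fin j, ∃ B, 0 < B ∧ ∀ (n : ℕ) (s : Fin j),
          ‖f (κ ℓ) (k + (ℓ:ℕ)) (n + (s:ℕ))‖ ≤ B * g (κ ℓ) ^ n := by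
        intro ℓ
        by_cases hlt : ((κ ℓ):ℕ) < m
        · refine ⟨(‖c (k + (ℓ:ℕ)) ⟨((κ ℓ):ℕ), hlt⟩‖ + 1) *
            (max 1 ‖r ⟨((κ ℓ):ℕ), hlt⟩‖) ^ (j + (k + (ℓ:ℕ)) + 1), by positivity, ?_⟩
          intro n s
          rw [hf]
          simp only [dif_pos hlt]
          have hgeq : g (κ ℓ) = ‖r ⟨((κ ℓ):ℕ), hlt⟩‖ := by
            rw [hg]; simp only [dif_pos hlt]
          rw [hgeq, norm_mul, norm_pow]
          have h1 : ‖r ⟨((κ ℓ):ℕ), hlt⟩‖ ^ ((n + (s:ℕ)) + (k + (ℓ:ℕ)) + 1)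
              = ‖r ⟨((κ ℓ):ℕ), hlt⟩‖ ^ ((s:ℕ) + (k + (ℓ:ℕ)) + 1)
                * ‖r ⟨((κ ℓ):ℕ), hlt⟩‖ ^ n := by
            rw [← pow_add]; congr 1; omega
          rw [h1, ← mul_assoc]
          have h2 : ‖r ⟨((κ ℓ):ℕ), hlt⟩‖ ^ ((s:ℕ) + (k + (ℓ:ℕ)) + 1)
              ≤ (max 1 ‖r ⟨((κ ℓ):ℕ), hlt⟩‖) ^ (j + (k + (ℓ:ℕ)) + 1) := by
            calc ‖r ⟨((κ ℓ):ℕ), hlt⟩‖ ^ ((s:ℕ) + (k + (ℓ:ℕ)) + 1)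
                ≤ (max 1 ‖r ⟨((κ ℓ):ℕ), hlt⟩‖) ^ ((s:ℕ) + (k + (ℓ:ℕ)) + 1) :=
                  pow_le_pow_left₀ (norm_nonneg _) (le_max_right _ _) _
            _ ≤ (max 1 ‖r ⟨((κ ℓ):ℕ), hlt⟩‖) ^ (j + (k + (ℓ:ℕ)) + 1) :=
                  pow_le_pow_right₀ (le_max_left _ _) (by have := s.isLt; omega)
          apply mul_le_mul _ le_rfl (by positivity) (by positivity)
          apply mul_le_mul (by linarith [norm_nonneg (c (k + (ℓ:ℕ)) ⟨((κ ℓ):ℕ), hlt⟩)]) h2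
            (by positivity) (by positivity)
        · have hμ0 := hμ (k + (ℓ:ℕ))
          have h1max : (0:ℝ) < (max 1 (ρ (k + (ℓ:ℕ)))) ^ j :=
            pow_pos (lt_of_lt_of_le one_pos (le_max_left _ _)) _
          refine ⟨(μ (k + (ℓ:ℕ)) + 1) * (max 1 (ρ (k + (ℓ:ℕ)))) ^ j,
            mul_pos (by linarith) h1max, ?_⟩
          intro n s
          rw [hf]
          simp only [dif_neg hlt]
          have hgeq : g (κ ℓ) = ρbar := by rw [hg]; simp only [dif_neg hlt]
          rw [hgeq]
          calc ‖b (k + (ℓ:ℕ)) (n + (s:ℕ))‖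
              ≤ μ (k + (ℓ:ℕ)) * ρ (k + (ℓ:ℕ)) ^ (n + (s:ℕ)) := hb _ _
          _ = (μ (k + (ℓ:ℕ)) * ρ (k + (ℓ:ℕ)) ^ (s:ℕ)) * ρ (k + (ℓ:ℕ)) ^ n := by
              rw [pow_add]; ring
          _ ≤ ((μ (k + (ℓ:ℕ)) + 1) * (max 1 (ρ (k + (ℓ:ℕ)))) ^ j) * ρbar ^ n := by
              have hρ0 := hρpos (k + (ℓ:ℕ))
              have hs : ρ (k + (ℓ:ℕ)) ^ (s:ℕ) ≤ (max 1 (ρ (k + (ℓ:ℕ)))) ^ j := by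
                calc ρ (k + (ℓ:ℕ)) ^ (s:ℕ) ≤ (max 1 (ρ (k + (ℓ:ℕ)))) ^ (s:ℕ) :=
                    pow_le_pow_left₀ (le_of_lt hρ0) (le_max_right _ _) _
                _ ≤ (max 1 (ρ (k + (ℓ:ℕ)))) ^ j :=
                    pow_le_pow_right₀ (le_max_left _ _) (by have := s.isLt; omega)
              have hn : ρ (k + (ℓ:ℕ)) ^ n ≤ ρbar ^ n :=
                pow_le_pow_left₀ (le_of_lt hρ0) (hρbarle ℓ) n
              apply mul_le_mul _ hn (pow_nonneg hρ0.le n)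
                (mul_nonneg (by linarith) h1max.le)
              apply mul_le_mul (by linarith) hs (pow_nonneg hρ0.le _) (by linarith)
      choose B hBpos hBle using hcol
      -- determinant bound
      have hTb : ∀ n, ‖T κ n‖ ≤ (Fintype.card (Equiv.Perm (Fin j)) : ℝ) * (∏ ℓ, B ℓ)
          * (∏ ℓ, g (κ ℓ)) ^ n := by
        intro n
        show ‖(Matrix.of fun s ℓ : Fin j => f (κ ℓ) (k + (ℓ:ℕ)) (n + (s:ℕ))).det‖ ≤ _
        rw [Matrix.det_apply]
        have hterm : ∀ σ : Equiv.Perm (Fin j),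
            ‖Equiv.Perm.sign σ • ∏ ℓ, (Matrix.of fun s ℓ : Fin j =>
              f (κ ℓ) (k + (ℓ:ℕ)) (n + (s:ℕ))) (σ ℓ) ℓ‖
            ≤ (∏ ℓ, B ℓ) * (∏ ℓ, g (κ ℓ)) ^ n := by
          intro σ
          have hsgn : ‖Equiv.Perm.sign σ • ∏ ℓ, (Matrix.of fun s ℓ : Fin j =>
              f (κ ℓ) (k + (ℓ:ℕ)) (n + (s:ℕ))) (σ ℓ) ℓ‖
              = ‖∏ ℓ, (Matrix.of fun s ℓ : Fin j =>
              f (κ ℓ) (k + (ℓ:ℕ)) (n + (s:ℕ))) (σ ℓ) ℓ‖ := by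
            rcases Int.units_eq_one_or (Equiv.Perm.sign σ) with h | h <;> rw [h] <;> simp
          rw [hsgn, norm_prod]
          calc ∏ ℓ, ‖(Matrix.of fun s ℓ : Fin j =>
              f (κ ℓ) (k + (ℓ:ℕ)) (n + (s:ℕ))) (σ ℓ) ℓ‖
              ≤ ∏ ℓ, (B ℓ * g (κ ℓ) ^ n) := by
                apply Finset.prod_le_prod
                · intro ℓ _; exact norm_nonneg _
                · intro ℓ _; exact hBle ℓ n (σ ℓ)
          _ = (∏ ℓ, B ℓ) * (∏ ℓ, g (κ ℓ)) ^ n := by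
                rw [Finset.prod_mul_distrib, Finset.prod_pow]
        calc ‖∑ σ : Equiv.Perm (Fin j), Equiv.Perm.sign σ • ∏ ℓ, (Matrix.of fun s ℓ : Fin j =>
              f (κ ℓ) (k + (ℓ:ℕ)) (n + (s:ℕ))) (σ ℓ) ℓ‖
            ≤ ∑ σ : Equiv.Perm (Fin j), ‖Equiv.Perm.sign σ • ∏ ℓ, (Matrix.of fun s ℓ : Fin j =>
              f (κ ℓ) (k + (ℓ:ℕ)) (n + (s:ℕ))) (σ ℓ) ℓ‖ := norm_sum_le _ _
        _ ≤ ∑ _σ : Equiv.Perm (Fin j), (∏ ℓ, B ℓ) * (∏ ℓ, g (κ ℓ)) ^ n :=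
            Finset.sum_le_sum (fun σ _ => hterm σ)
        _ = (Fintype.card (Equiv.Perm (Fin j)) : ℝ) * ((∏ ℓ, B ℓ) * (∏ ℓ, g (κ ℓ)) ^ n) := by
            rw [Finset.sum_const, Finset.card_univ, nsmul_eq_mul]
        _ = (Fintype.card (Equiv.Perm (Fin j)) : ℝ) * (∏ ℓ, B ℓ) * (∏ ℓ, g (κ ℓ)) ^ n := by
            ring
      -- compare to ‖P‖
      have hPnorm : ‖P‖ = ∏ ℓ : Fin j, g ⟨(ℓ:ℕ), by omega⟩ := by
        rw [hP, norm_prod]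
        apply Finset.prod_congr rfl
        intro ℓ _
        have hl : (ℓ:ℕ) < m := lt_of_lt_of_le ℓ.isLt hj
        rw [hg]
        simp only [dif_pos hl]
        rfl
      have hprodlt : ∏ ℓ, g (κ ℓ) < ‖P‖ := by
        rw [hPnorm]
        exact prod_lt_of_escape hj g hganti hgpos κ hdup' hesc
      have hprodpos : 0 < ∏ ℓ, g (κ ℓ) := Finset.prod_pos (fun ℓ _ => hgpos _)
      have hBprod : 0 < ∏ ℓ, B ℓ := Finset.prod_pos (fun ℓ _ => hBpos ℓ)
      have hcard0 : (0:ℝ) ≤ (Fintype.card (Equiv.Perm (Fin j)) : ℝ) * (∏ ℓ, B ℓ) :=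
        mul_nonneg (Nat.cast_nonneg _) hBprod.le
      refine ⟨(Fintype.card (Equiv.Perm (Fin j)) : ℝ) * (∏ ℓ, B ℓ) + 1, by linarith,
        (∏ ℓ, g (κ ℓ)) / ‖P‖, div_nonneg hprodpos.le hPpos.le,
        (div_lt_one hPpos).mpr hprodlt, fun n => ?_⟩
      have hgPn : (∏ ℓ, g (κ ℓ)) ^ n = ((∏ ℓ, g (κ ℓ)) / ‖P‖) ^ n * ‖P‖ ^ n := by
        rw [← mul_pow, div_mul_cancel₀ _ (ne_of_gt hPpos)]
      calc ‖T κ n‖ ≤ (Fintype.card (Equiv.Perm (Fin j)) : ℝ) * (∏ ℓ, B ℓ)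
            * (∏ ℓ, g (κ ℓ)) ^ n := hTb n
      _ ≤ ((Fintype.card (Equiv.Perm (Fin j)) : ℝ) * (∏ ℓ, B ℓ) + 1)
            * (∏ ℓ, g (κ ℓ)) ^ n := by
          have : (0:ℝ) ≤ (∏ ℓ, g (κ ℓ)) ^ n := by positivity
          nlinarith
      _ = ((Fintype.card (Equiv.Perm (Fin j)) : ℝ) * (∏ ℓ, B ℓ) + 1)
            * ((∏ ℓ, g (κ ℓ)) / ‖P‖) ^ n * ‖P‖ ^ n := by
          rw [hgPn]; ring
  -- assemble
  obtain ⟨C, hC, θ, hθ0, hθ1, hbound⟩ := hbad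
  refine ⟨C, hC, θ, hθ0, hθ1, fun n => ?_⟩
  have hsplit : casorati a k j n - P ^ n * leadConst m r c k j hj
      = ∑ κ ∈ Finset.univ.filter
        (fun κ : Fin j → Fin (m+1) => ¬ ∀ ℓ, ((κ ℓ):ℕ) < j), T κ n := by
    rw [expand n]
    rw [← Finset.sum_filter_add_sum_filter_not Finset.univ
      (fun κ : Fin j → Fin (m+1) => ∀ ℓ, ((κ ℓ):ℕ) < j) (fun κ => T κ n)]
    rw [hgood n]
    ring
  rw [hsplit]
  exact hbound n

lemma eventual_bounds (m : ℕ) (hm : 1 ≤ m)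
    (a b : ℕ → ℕ → ℂ) (r : Fin m → ℂ) (c : ℕ → Fin m → ℂ) (ρ μ : ℕ → ℝ)
    (hr0 : ∀ ℓ, r ℓ ≠ 0)
    (hrdec : ∀ ℓ₁ ℓ₂ : Fin m, ℓ₁ < ℓ₂ → ‖r ℓ₂‖ < ‖r ℓ₁‖)
    (hρpos : ∀ k, 0 < ρ k)
    (hρlt : ∀ k, ρ k < ‖r ⟨m - 1, by omega⟩‖)
    (hμ : ∀ k, 0 < μ k)
    (hb : ∀ k n : ℕ, ‖b k n‖ ≤ μ k * ρ k ^ n)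
    (ha : ∀ k n : ℕ, a k n = (∑ ℓ, c k ℓ * r ℓ ^ (n + k + 1)) + b k n)
    (k j : ℕ) (hj : j ≤ m) (hL : leadConst m r c k j hj ≠ 0) :
    ∃ N : ℕ, ∀ n ≥ N, casorati a k j n ≠ 0 ∧
      ‖casorati a k j n‖
        ≤ 2 * ‖leadConst m r c k j hj‖ * ‖∏ ℓ : Fin j, r (Fin.castLE hj ℓ)‖ ^ n ∧
      ‖leadConst m r c k j hj‖ / 2 * ‖∏ ℓ : Fin j, r (Fin.castLE hj ℓ)‖ ^ n
        ≤ ‖casorati a k j n‖ := by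
  obtain ⟨C, hC, θ, hθ0, hθ1, hbd⟩ :=
    key m hm a b r c ρ μ hr0 hrdec hρpos hρlt hμ hb ha k j hj
  set L := leadConst m r c k j hj with hLdef
  set P := ∏ ℓ : Fin j, r (Fin.castLE hj ℓ) with hPdef
  have hLpos : 0 < ‖L‖ := norm_pos_iff.mpr hL
  have hPne : P ≠ 0 := Finset.prod_ne_zero_iff.mpr (fun ℓ _ => hr0 _)
  have hPpos : 0 < ‖P‖ := norm_pos_iff.mpr hPne
  have htend : Filter.Tendsto (fun n : ℕ => θ ^ n) Filter.atTop (nhds 0) :=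
    tendsto_pow_atTop_nhds_zero_of_lt_one hθ0 hθ1
  have hev : ∀ᶠ n in Filter.atTop, θ ^ n < ‖L‖ / (2 * C) :=
    htend.eventually (gt_mem_nhds (by positivity))
  obtain ⟨N, hN⟩ := Filter.eventually_atTop.mp hev
  refine ⟨N, fun n hn => ?_⟩
  have h1 : ‖casorati a k j n - P ^ n * L‖ ≤ ‖L‖ / 2 * ‖P‖ ^ n := by
    calc ‖casorati a k j n - P ^ n * L‖ ≤ C * θ ^ n * ‖P‖ ^ n := hbd n
    _ ≤ C * (‖L‖ / (2 * C)) * ‖P‖ ^ n := by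
        apply mul_le_mul_of_nonneg_right _ (by positivity)
        exact mul_le_mul_of_nonneg_left (le_of_lt (hN n hn)) hC.le
    _ = ‖L‖ / 2 * ‖P‖ ^ n := by
        field_simp
  have hPL : ‖P ^ n * L‖ = ‖L‖ * ‖P‖ ^ n := by
    rw [norm_mul, norm_pow]; ring
  have hlow : ‖L‖ / 2 * ‖P‖ ^ n ≤ ‖casorati a k j n‖ := by
    have h2 := norm_sub_norm_le (P ^ n * L) (casorati a k j n)
    rw [norm_sub_rev, hPL] at h2
    have h3 : (0:ℝ) < ‖P‖ ^ n := by positivity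
    nlinarith
  have hup : ‖casorati a k j n‖ ≤ 2 * ‖L‖ * ‖P‖ ^ n := by
    have h2 : casorati a k j n = (casorati a k j n - P ^ n * L) + P ^ n * L := by ring
    calc ‖casorati a k j n‖
        ≤ ‖casorati a k j n - P ^ n * L‖ + ‖P ^ n * L‖ := by
          conv_lhs => rw [h2]
          exact norm_add_le _ _
    _ ≤ ‖L‖ / 2 * ‖P‖ ^ n + ‖L‖ * ‖P‖ ^ n := by rw [hPL]; linarith
    _ ≤ 2 * ‖L‖ * ‖P‖ ^ n := by
        have h3 : (0:ℝ) < ‖P‖ ^ n := by positivity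
        nlinarith
  have hne : casorati a k j n ≠ 0 := by
    intro hzero
    rw [hzero, norm_zero] at hlow
    have h3 : (0:ℝ) < ‖P‖ ^ n := by positivity
    nlinarith
  exact ⟨hne, hup, hlow⟩

lemma final_rate (M m : ℕ) (hm : 1 ≤ m)
    (a b : ℕ → ℕ → ℂ) (r : Fin m → ℂ) (c : ℕ → Fin m → ℂ) (ρ μ : ℕ → ℝ)
    (hr0 : ∀ ℓ, r ℓ ≠ 0)
    (hrdec : ∀ ℓ₁ ℓ₂ : Fin m, ℓ₁ < ℓ₂ → ‖r ℓ₂‖ < ‖r ℓ₁‖)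
    (hρpos : ∀ k, 0 < ρ k)
    (hρlt : ∀ k, ρ k < ‖r ⟨m - 1, by omega⟩‖)
    (hμ : ∀ k, 0 < μ k)
    (hb : ∀ k n : ℕ, ‖b k n‖ ≤ μ k * ρ k ^ n)
    (ha : ∀ k n : ℕ, a k n = (∑ ℓ, c k ℓ * r ℓ ^ (n + k + 1)) + b k n)
    (hcnz : ∀ k ≤ M, ∀ j, ∀ h : j ≤ m, leadConst m r c k j h ≠ 0)
    (i j' : ℕ) (hiM : i ≤ M) (hi1M : i + 1 ≤ M)
    (h0 : j' ≤ m) (h1 : j' + 1 ≤ m) (h2 : j' + 2 ≤ m)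
    (hjm' : j' < m) (hjm'' : j' + 1 < m) :
    ∃ K, 0 < K ∧ ∃ N : ℕ, ∀ n ≥ N,
      casorati a i (j'+1) n ≠ 0 ∧ casorati a (i+1) (j'+1) n ≠ 0 ∧
      ‖casorati a i (j'+2) n * casorati a (i+1) j' n /
          (casorati a i (j'+1) n * casorati a (i+1) (j'+1) n)‖
        ≤ K * (‖r ⟨j'+1, hjm''⟩‖ / ‖r ⟨j', hjm'⟩‖) ^ n := by
  have hstep : ∀ (J : ℕ) (hJ1 : J + 1 ≤ m) (hJ0 : J ≤ m) (hJm : J < m),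
      ‖∏ ℓ : Fin (J+1), r (Fin.castLE hJ1 ℓ)‖
        = ‖∏ ℓ : Fin J, r (Fin.castLE hJ0 ℓ)‖ * ‖r ⟨J, hJm⟩‖ := by
    intro J hJ1 hJ0 hJm
    rw [← norm_mul]
    congr 1
    rw [Fin.prod_univ_castSucc]
    congr 1
  obtain ⟨NA, hA⟩ := eventual_bounds m hm a b r c ρ μ hr0 hrdec hρpos hρlt hμ hb ha
    i (j'+2) h2 (hcnz i hiM (j'+2) h2)
  obtain ⟨NB, hB⟩ := eventual_bounds m hm a b r c ρ μ hr0 hrdec hρpos hρlt hμ hb ha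
    (i+1) j' h0 (hcnz (i+1) hi1M j' h0)
  obtain ⟨ND, hD⟩ := eventual_bounds m hm a b r c ρ μ hr0 hrdec hρpos hρlt hμ hb ha
    i (j'+1) h1 (hcnz i hiM (j'+1) h1)
  obtain ⟨NE, hE⟩ := eventual_bounds m hm a b r c ρ μ hr0 hrdec hρpos hρlt hμ hb ha
    (i+1) (j'+1) h1 (hcnz (i+1) hi1M (j'+1) h1)
  set x : ℝ := ‖∏ ℓ : Fin j', r (Fin.castLE h0 ℓ)‖ with hxdef
  set y : ℝ := ‖∏ ℓ : Fin (j'+1), r (Fin.castLE h1 ℓ)‖ with hydef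
  set z : ℝ := ‖∏ ℓ : Fin (j'+2), r (Fin.castLE h2 ℓ)‖ with hzdef
  set a1 : ℝ := ‖r ⟨j', hjm'⟩‖ with ha1def
  set a2 : ℝ := ‖r ⟨j'+1, hjm''⟩‖ with ha2def
  set LA : ℝ := ‖leadConst m r c i (j'+2) h2‖ with hLAdef
  set LB : ℝ := ‖leadConst m r c (i+1) j' h0‖ with hLBdef
  set LD : ℝ := ‖leadConst m r c i (j'+1) h1‖ with hLDdef
  set LE : ℝ := ‖leadConst m r c (i+1) (j'+1) h1‖ with hLEdef
  have hxpos : 0 < x := norm_pos_iff.mpr (Finset.prod_ne_zero_iff.mpr (fun ℓ _ => hr0 _))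
  have hypos : 0 < y := norm_pos_iff.mpr (Finset.prod_ne_zero_iff.mpr (fun ℓ _ => hr0 _))
  have hzpos : 0 < z := norm_pos_iff.mpr (Finset.prod_ne_zero_iff.mpr (fun ℓ _ => hr0 _))
  have ha1pos : 0 < a1 := norm_pos_iff.mpr (hr0 _)
  have ha2pos : 0 < a2 := norm_pos_iff.mpr (hr0 _)
  have hLApos : 0 < LA := norm_pos_iff.mpr (hcnz i hiM (j'+2) h2)
  have hLBpos : 0 < LB := norm_pos_iff.mpr (hcnz (i+1) hi1M j' h0)
  have hLDpos : 0 < LD := norm_pos_iff.mpr (hcnz i hiM (j'+1) h1)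
  have hLEpos : 0 < LE := norm_pos_iff.mpr (hcnz (i+1) hi1M (j'+1) h1)
  have hy : y = x * a1 := hstep j' h1 h0 hjm'
  have hz : z = y * a2 := hstep (j'+1) h2 h1 hjm''
  clear_value x y z a1 a2 LA LB LD LE
  refine ⟨16 * LA * LB / (LD * LE),
    div_pos (mul_pos (mul_pos (by norm_num) hLApos) hLBpos) (mul_pos hLDpos hLEpos),
    max (max NA NB) (max ND NE), fun n hn => ?_⟩
  have hnA := hA n (((le_max_left NA NB).trans (le_max_left _ _)).trans hn)
  have hnB := hB n (((le_max_right NA NB).trans (le_max_left _ _)).trans hn)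
  have hnD := hD n (((le_max_left ND NE).trans (le_max_right _ _)).trans hn)
  have hnE := hE n (((le_max_right ND NE).trans (le_max_right _ _)).trans hn)
  refine ⟨hnD.1, hnE.1, ?_⟩
  rw [norm_div, norm_mul, norm_mul]
  have hnum : ‖casorati a i (j'+2) n‖ * ‖casorati a (i+1) j' n‖
      ≤ (2 * LA * z ^ n) * (2 * LB * x ^ n) :=
    mul_le_mul hnA.2.1 hnB.2.1 (norm_nonneg _)
      (mul_nonneg (mul_nonneg (by norm_num) hLApos.le) (pow_nonneg hzpos.le n))
  have hden : (LD / 2 * y ^ n) * (LE / 2 * y ^ n)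
      ≤ ‖casorati a i (j'+1) n‖ * ‖casorati a (i+1) (j'+1) n‖ :=
    mul_le_mul hnD.2.2 hnE.2.2
      (mul_nonneg (by linarith) (pow_nonneg hypos.le n)) (norm_nonneg _)
  have hdenpos : 0 < (LD / 2 * y ^ n) * (LE / 2 * y ^ n) :=
    mul_pos (mul_pos (by linarith) (pow_pos hypos n))
      (mul_pos (by linarith) (pow_pos hypos n))
  calc ‖casorati a i (j'+2) n‖ * ‖casorati a (i+1) j' n‖ /
        (‖casorati a i (j'+1) n‖ * ‖casorati a (i+1) (j'+1) n‖)
      ≤ ((2 * LA * z ^ n) * (2 * LB * x ^ n)) / ((LD / 2 * y ^ n) * (LE / 2 * y ^ n)) :=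
        div_le_div₀
          (mul_nonneg (mul_nonneg (mul_nonneg (by norm_num) hLApos.le) (pow_nonneg hzpos.le n))
            (mul_nonneg (mul_nonneg (by norm_num) hLBpos.le) (pow_nonneg hxpos.le n)))
          hnum hdenpos hden
  _ = (16 * LA * LB / (LD * LE)) * (a2 / a1) ^ n := by
      rw [hz, hy, div_pow, mul_pow, mul_pow]
      field_simp
      ring

/- STATEMENT 10: rate of convergence of the vanishing auxiliary variables:
|v_{i+j(M+1)}^{(n)}| ≤ K (|r_{j+1}|/|r_j|)^n for all sufficiently large n. -/
theorem dhLV_auxiliary_rate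
    (M m : ℕ) (hM : 1 ≤ M) (hm : 2 ≤ m)
    (a b : ℕ → ℕ → ℂ)
    (r : Fin m → ℂ) (c : ℕ → Fin m → ℂ) (ρ μ : ℕ → ℝ)
    (hr0 : ∀ ℓ, r ℓ ≠ 0)
    (hrdec : ∀ ℓ₁ ℓ₂ : Fin m, ℓ₁ < ℓ₂ → ‖r ℓ₂‖ < ‖r ℓ₁‖)
    (hc : ∀ k ℓ, c k ℓ ≠ 0)
    (hρpos : ∀ k, 0 < ρ k)
    (hρlt : ∀ k, ρ k < ‖r ⟨m - 1, by omega⟩‖)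
    (hμ : ∀ k, 0 < μ k)
    (hb : ∀ k n : ℕ, ‖b k n‖ ≤ μ k * ρ k ^ n)
    (ha : ∀ k n : ℕ, a k n = (∑ ℓ, c k ℓ * r ℓ ^ (n + k + 1)) + b k n)
    (hcnz : ∀ k ≤ M, ∀ j, ∀ h : j ≤ m, leadConst m r c k j h ≠ 0) :
    ∀ i < M, ∀ j, ∀ hj1 : 1 ≤ j, ∀ hjm : j ≤ m - 1,
      ∃ K > 0, ∃ N : ℕ, ∀ n ≥ N,
        casorati a i j n ≠ 0 ∧ casorati a (i + 1) j n ≠ 0 ∧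
        ‖casorati a i (j + 1) n * casorati a (i + 1) (j - 1) n /
            (casorati a i j n * casorati a (i + 1) j n)‖ ≤
          K * (‖r ⟨j, by omega⟩‖ / ‖r ⟨j - 1, by omega⟩‖) ^ n := by
  intro i hi j hj1 hjm
  obtain ⟨j', rfl⟩ : ∃ j'', j = j'' + 1 := ⟨j - 1, by omega⟩
  obtain ⟨K, hK, N, hN⟩ := final_rate M m (by omega) a b r c ρ μ hr0 hrdec hρpos hρlt
    hμ hb ha hcnz i j' (by omega) (by omega) (by omega) (by omega) (by omega)
    (by omega) (by omega)
  exact ⟨K, hK, N, fun n hn => hN n hn⟩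
end

section
/- Let M ≥ 1 and m ≥ 1 be integers. Let u_k^{(n)} (n ≥ 0) be complex numbers for k = 0, 1, …, (M+1)m−M−1, extended by the boundary convention u_k^{(n)} := 0 for −M ≤ k ≤ −1 and for (M+1)m−M ≤ k ≤ (M+1)m−1. Let δ^{(n)} be nonzero complex numbers converging to a nonzero limit δ as n → ∞. For k = M, M+1, …, (M+1)m−1 define v_k^{(n)} := u_{k−M}^{(n)} Π_{ℓ=1}^{M} (δ^{(n)} + u_{k−M−ℓ}^{(n)}), and assume δ^{(n)} + u_k^{(n)} ≠ 0 for all n ≥ 0 and all k in the extended index range. Assume that for every i = 0, 1, …, M−1 and every j ≥ 1 with i + j(M+1) ≤ (M+1)m−1, v_{i+j(M+1)}^{(n)} → 0 as n → ∞, and that for every j = 0, 1, …, m−1, v_{M+j(M+1)}^{(n)} → ĉ_j as n → ∞, where ĉ_j are complex constants with ĉ_j ≠ 0 and δ + ĉ_j/δ^M ≠ 0. Then, for every j = 0, 1, …, m−1, u_{j(M+1)}^{(n)} converges to the nonzero constant c̄_j := ĉ_j/δ^M as n → ∞, and for every i = 1, …, M with i + j(M+1) ≤ (M+1)m−M−1,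 u_{i+j(M+1)}^{(n)} converges to 0 as n → ∞. -/
/- STATEMENT 11: convergence theorem for the discrete hungry Lotka–Volterra system.
The variables u_k^{(n)}, k = 0,…,(M+1)m−M−1, are extended by the boundary convention
u_k^{(n)} = 0 for −M ≤ k ≤ −1 and (M+1)m−M ≤ k ≤ (M+1)m−1; the auxiliary variables are
v_k^{(n)} = u_{k−M}^{(n)} Π_{ℓ=1}^{M} (δ^{(n)} + u_{k−M−ℓ}^{(n)}), k = M,…,(M+1)m−1.
If v_{i+j(M+1)}^{(n)} → 0 (0 ≤ i ≤ M−1) and v_{M+j(M+1)}^{(n)} → ĉ_j ≠ 0 with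
δ + ĉ_j/δ^M ≠ 0, then u_{j(M+1)}^{(n)} → c̄_j = ĉ_j/δ^M ≠ 0 and the other
u_{i+j(M+1)}^{(n)} → 0. -/

open Classical in
/-- The limit of `u z` in the dhLV convergence theorem. -/
noncomputable def dhLVLim (M m : ℕ) (cc : ℕ → ℂ) (δlim : ℂ) (z : ℤ) : ℂ :=
  if 0 ≤ z ∧ z ≤ ((M:ℤ)+1) * ((m:ℤ)-1) ∧ ((M:ℤ)+1) ∣ z
  then cc (z / ((M:ℤ)+1)).toNat / δlim ^ M else 0

theorem dhLV_convergence
    (M m : ℕ) (hM : 1 ≤ M) (hm : 1 ≤ m)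
    (u : ℤ → ℕ → ℂ) (δ : ℕ → ℂ) (δlim : ℂ)
    (hδ0 : ∀ n, δ n ≠ 0) (hδlim0 : δlim ≠ 0)
    (hδlim : Filter.Tendsto δ Filter.atTop (nhds δlim))
    (hbd1 : ∀ z : ℤ, -(M : ℤ) ≤ z → z ≤ -1 → ∀ n, u z n = 0)
    (hbd2 : ∀ z : ℤ, ((M : ℤ) + 1) * m - M ≤ z → z ≤ ((M : ℤ) + 1) * m - 1 →
      ∀ n, u z n = 0)
    (hne : ∀ z : ℤ, -(M : ℤ) ≤ z → z ≤ ((M : ℤ) + 1) * m - 1 →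
      ∀ n, δ n + u z n ≠ 0)
    (v : ℕ → ℕ → ℂ)
    (hv : ∀ k : ℕ, M ≤ k → k ≤ (M + 1) * m - 1 → ∀ n,
      v k n = u ((k : ℤ) - M) n *
        ∏ ℓ ∈ Finset.Icc 1 M, (δ n + u ((k : ℤ) - M - (ℓ : ℤ)) n))
    (cc : ℕ → ℂ)
    (hv0 : ∀ i < M, ∀ j, 1 ≤ j → i + j * (M + 1) ≤ (M + 1) * m - 1 →
      Filter.Tendsto (v (i + j * (M + 1))) Filter.atTop (nhds 0))
    (hvc : ∀ j ≤ m - 1,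
      Filter.Tendsto (v (M + j * (M + 1))) Filter.atTop (nhds (cc j)))
    (hcc0 : ∀ j ≤ m - 1, cc j ≠ 0)
    (hccδ : ∀ j ≤ m - 1, δlim + cc j / δlim ^ M ≠ 0) :
    ∀ j ≤ m - 1,
      (Filter.Tendsto (u ((j : ℤ) * ((M : ℤ) + 1))) Filter.atTop
          (nhds (cc j / δlim ^ M)) ∧
        cc j / δlim ^ M ≠ 0) ∧
      ∀ i : ℕ, 1 ≤ i → i ≤ M →
        (i : ℤ) + (j : ℤ) * ((M : ℤ) + 1) ≤ ((M : ℤ) + 1) * m - M - 1 →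
        Filter.Tendsto (u ((i : ℤ) + (j : ℤ) * ((M : ℤ) + 1))) Filter.atTop
          (nhds 0) := by
  have hDpos : (0:ℤ) < (M:ℤ) + 1 := by positivity
  have hδM : δlim ^ M ≠ 0 := pow_ne_zero _ hδlim0
  set L : ℤ → ℂ := dhLVLim M m cc δlim with hLdef
  have hexp : ((M:ℤ)+1) * ((m:ℤ)-1) = ((M:ℤ)+1) * m - M - 1 := by ring
  -- δlim + L z ≠ 0 for every z
  have hLne : ∀ z : ℤ, δlim + L z ≠ 0 := by
    intro z
    rw [hLdef]
    unfold dhLVLim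
    split_ifs with h
    · obtain ⟨h0, h1, t, ht⟩ := h
      rw [ht] at h0 h1 ⊢
      have ht0 : (0:ℤ) ≤ t := by
        rcases le_or_gt 0 t with h' | h'
        · exact h'
        · nlinarith
      have ht1 : t ≤ (m:ℤ) - 1 := le_of_mul_le_mul_left h1 hDpos
      have htoNat : ((((M:ℤ)+1) * t) / ((M:ℤ)+1)).toNat ≤ m - 1 := by
        rw [Int.mul_ediv_cancel_left _ (by omega)]
        omega
      exact hccδ _ htoNat
    · simpa using hδlim0
  -- main induction
  have main : ∀ k : ℕ, (k:ℤ) ≤ ((M:ℤ)+1) * ((m:ℤ)-1) →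
      Filter.Tendsto (u (k:ℤ)) Filter.atTop (nhds (L (k:ℤ))) := by
    intro k
    induction k using Nat.strong_induction_on with
    | _ k ih =>
      intro hkT
      -- limits of the factors
      have hprev : ∀ ℓ ∈ Finset.Icc 1 M,
          Filter.Tendsto (fun n => δ n + u ((k:ℤ) - (ℓ:ℤ)) n) Filter.atTop
            (nhds (δlim + L ((k:ℤ) - (ℓ:ℤ)))) := by
        intro ℓ hℓ
        rw [Finset.mem_Icc] at hℓ
        refine hδlim.add ?_
        by_cases hneg : (k:ℤ) - (ℓ:ℤ) < 0
        · have hz : u ((k:ℤ) - (ℓ:ℤ)) = fun _ => (0:ℂ) :=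
            funext fun n => hbd1 _ (by omega) (by omega) n
          have hL0 : L ((k:ℤ) - (ℓ:ℤ)) = 0 := by
            rw [hLdef]
            unfold dhLVLim
            exact if_neg (fun h => absurd h.1 (not_le.mpr hneg))
          rw [hz, hL0]
          exact tendsto_const_nhds
        · push_neg at hneg
          have hk' : ((k - ℓ : ℕ) : ℤ) = (k:ℤ) - (ℓ:ℤ) := by omega
          rw [← hk']
          exact ih (k - ℓ) (by omega) (le_trans (by omega) hkT)
      have hkM2 : k + M ≤ (M + 1) * m - 1 := by
        have h2 : 1 ≤ (M + 1) * m := Nat.one_le_iff_ne_zero.mpr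
          (Nat.mul_ne_zero (by omega) (by omega))
        zify [h2]
        linarith [hkT, hexp]
      have hvrel := hv (k + M) (by omega) hkM2
      have hcast : ∀ ℓ : ℕ, ((k+M:ℕ):ℤ) - (M:ℤ) - (ℓ:ℤ) = (k:ℤ) - (ℓ:ℤ) := by
        intro ℓ; push_cast; ring
      have hcast0 : ((k+M:ℕ):ℤ) - (M:ℤ) = (k:ℤ) := by push_cast; ring
      simp only [hcast0, hcast] at hvrel
      have hPne : ∀ n, (∏ ℓ ∈ Finset.Icc 1 M, (δ n + u ((k:ℤ) - (ℓ:ℤ)) n)) ≠ 0 := by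
        intro n
        refine Finset.prod_ne_zero_iff.mpr fun ℓ hℓ => ?_
        rw [Finset.mem_Icc] at hℓ
        exact hne _ (by omega) (by linarith [hkT, hexp]) n
      have huk : u (k:ℤ) =
          fun n => v (k+M) n / ∏ ℓ ∈ Finset.Icc 1 M, (δ n + u ((k:ℤ) - (ℓ:ℤ)) n) :=
        funext fun n => by
          rw [hvrel n]
          exact (mul_div_cancel_right₀ _ (hPne n)).symm
      have hprod := tendsto_finset_prod (Finset.Icc 1 M) hprev
      have hQne : (∏ ℓ ∈ Finset.Icc 1 M, (δlim + L ((k:ℤ) - (ℓ:ℤ)))) ≠ 0 :=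
        Finset.prod_ne_zero_iff.mpr fun ℓ _ => hLne _
      by_cases hdvd : ((M:ℤ)+1) ∣ (k:ℤ)
      · -- k is a multiple of M+1
        have hdvdN : (M+1) ∣ k := by
          have : ((M+1:ℕ):ℤ) ∣ (k:ℤ) := by push_cast; exact hdvd
          exact_mod_cast this
        obtain ⟨j, hj⟩ := hdvdN
        have hkj : (k:ℤ) = ((M:ℤ)+1) * (j:ℤ) := by exact_mod_cast hj
        have hjm : j ≤ m - 1 := by
          rw [hkj] at hkT
          have := le_of_mul_le_mul_left hkT hDpos
          omega
        have hnum : Filter.Tendsto (v (k + M)) Filter.atTop (nhds (cc j)) := by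
          have h := hvc j hjm
          have hidx : M + j * (M+1) = k + M := by rw [hj]; ring
          rwa [hidx] at h
        have hterm : ∀ ℓ ∈ Finset.Icc 1 M, δlim + L ((k:ℤ) - (ℓ:ℤ)) = δlim := by
          intro ℓ hℓ
          rw [Finset.mem_Icc] at hℓ
          have hnd : ¬ ((M:ℤ)+1) ∣ ((k:ℤ) - (ℓ:ℤ)) := by
            intro hdd
            have hℓd : ((M:ℤ)+1) ∣ (ℓ:ℤ) := by
              have := dvd_sub hdvd hdd
              simpa using this
            have := Int.le_of_dvd (by omega) hℓd
            omega
          rw [hLdef]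
          unfold dhLVLim
          rw [if_neg (fun h => hnd h.2.2), add_zero]
        have hQ : (∏ ℓ ∈ Finset.Icc 1 M, (δlim + L ((k:ℤ) - (ℓ:ℤ)))) = δlim ^ M := by
          rw [Finset.prod_congr rfl hterm, Finset.prod_const, Nat.card_Icc]
          norm_num
        have hLk : L (k:ℤ) = cc j / δlim ^ M := by
          rw [hLdef]
          unfold dhLVLim
          rw [if_pos ⟨Int.natCast_nonneg k, hkT, hdvd⟩]
          congr 1
          rw [hkj, Int.mul_ediv_cancel_left _ (by omega)]
          simp
        rw [huk, hLk]
        have hfin := hnum.div hprod hQne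
        rwa [hQ] at hfin
      · -- k is not a multiple of M+1
        have hndN : ¬ (M+1) ∣ k := by
          intro h
          exact hdvd (by exact_mod_cast (Int.natCast_dvd_natCast.mpr h))
        have hmod0 : k % (M+1) ≠ 0 := fun h => hndN (Nat.dvd_of_mod_eq_zero h)
        have hmodlt : k % (M+1) < M + 1 := Nat.mod_lt _ (by omega)
        obtain ⟨i', hi'⟩ : ∃ i', k % (M+1) = i' + 1 := ⟨k % (M+1) - 1, by omega⟩
        have hi'M : i' + 1 ≤ M := by omega
        have hk_eq : k = (i' + 1) + (M+1) * (k / (M+1)) := by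
          conv_lhs => rw [← Nat.mod_add_div k (M+1)]
          rw [hi']
        have hidx : i' + (k / (M+1) + 1) * (M+1) = k + M := by
          conv_rhs => rw [hk_eq]
          ring
        have hnum : Filter.Tendsto (v (k + M)) Filter.atTop (nhds 0) := by
          have hb1 : i' < M := by omega
          have hb2 : 1 ≤ k / (M+1) + 1 := Nat.le_add_left 1 _
          have hb3 : i' + (k / (M+1) + 1) * (M+1) ≤ (M + 1) * m - 1 := by
            rw [hidx]; exact hkM2
          have h := hv0 i' hb1 (k / (M+1) + 1) hb2 hb3
          rwa [hidx] at h
        have hLk : L (k:ℤ) = 0 := by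
          rw [hLdef]
          unfold dhLVLim
          exact if_neg (fun h => hdvd h.2.2)
        rw [huk, hLk]
        have hfin := hnum.div hprod hQne
        rwa [zero_div] at hfin
  -- conclusion
  intro j hj
  have hjZ : (j:ℤ) ≤ (m:ℤ) - 1 := by omega
  constructor
  · constructor
    · have hkT : ((j*(M+1) : ℕ):ℤ) ≤ ((M:ℤ)+1) * ((m:ℤ)-1) := by
        push_cast
        nlinarith [hjZ, hDpos]
      have h1 := main (j*(M+1)) hkT
      have hLk : L ((j*(M+1):ℕ):ℤ) = cc j / δlim ^ M := by
        rw [hLdef]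
        unfold dhLVLim
        rw [if_pos ⟨Int.natCast_nonneg _, hkT, ⟨(j:ℤ), by push_cast; ring⟩⟩]
        congr 1
        have : ((j*(M+1):ℕ):ℤ) = ((M:ℤ)+1) * (j:ℤ) := by push_cast; ring
        rw [this, Int.mul_ediv_cancel_left _ (by omega)]
        simp
      rw [hLk] at h1
      have hcast : ((j*(M+1):ℕ):ℤ) = (j:ℤ) * ((M:ℤ)+1) := by push_cast; ring
      rwa [hcast] at h1
    · exact div_ne_zero (hcc0 j hj) hδM
  · intro i hi1 hi2 hile
    have hkT : ((i + j*(M+1) : ℕ):ℤ) ≤ ((M:ℤ)+1) * ((m:ℤ)-1) := by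
      push_cast
      linarith [hile, hexp]
    have h1 := main (i + j*(M+1)) hkT
    have hLk : L ((i + j*(M+1):ℕ):ℤ) = 0 := by
      rw [hLdef]
      unfold dhLVLim
      refine if_neg ?_
      rintro ⟨-, -, hdd⟩
      have h3 : ((i + j*(M+1):ℕ):ℤ) = (j:ℤ)*((M:ℤ)+1) + (i:ℤ) := by push_cast; ring
      rw [h3] at hdd
      have hdi : ((M:ℤ)+1) ∣ (i:ℤ) :=
        (dvd_add_right ⟨(j:ℤ), mul_comm _ _⟩).mp hdd
      have := Int.le_of_dvd (by omega) hdi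
      omega
    rw [hLk] at h1
    have hcast : ((i + j*(M+1):ℕ):ℤ) = (i:ℤ) + (j:ℤ) * ((M:ℤ)+1) := by push_cast; ring
    rwa [hcast] at h1
end
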